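/- arXiv:1012.3978 — 2 statements merged into one kernel-verified Lean document; each statement's English description precedes it below -/
import Mathlib

section
/- For natural numbers n and d with d < n, the identity ∑_{i=0}^{d} i·C(n-d+i-2, i) = (n-d-1)·C(n-1, d-1) holds, where C denotes the binomial coefficient. -/
lemma aux2 (k d : ℕ) (hd : 1 ≤ d) :
    ∑ i ∈ Finset.range (d + 1), i * Nat.choose (k + i - 1) i
      = k * Nat.choose (k + d) (d - 1) := by
  induction d, hd using Nat.le_induction with
  | base => simp [Finset.sum_range_succ]
  | succ d hd ih =>
    rw [Finset.sum_range_succ, ih]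
    obtain ⟨e, rfl⟩ : ∃ e, d = e + 1 := ⟨d - 1, by omega⟩
    have h1 := Nat.choose_succ_right_eq (k + (e + 1)) (e + 1)
    have h2 : k + (e + 1) - (e + 1) = k := by omega
    rw [h2] at h1
    have h3 : k + (e + 1 + 1) = (k + (e + 1)) + 1 := by omega
    have h4 : (e + 1) + 1 - 1 = e + 1 := by omega
    have h5 : (e + 1) - 1 = e := by omega
    have h7 : k + (e + 1 + 1) - 1 = k + (e + 1) := by omega
    rw [h5, h7, h3, h4, Nat.choose_succ_succ (k + (e + 1)) e]
    calc k * (k + (e + 1)).choose e + (e + 1 + 1) * (k + (e + 1)).choose (e + 1 + 1)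
        = k * (k + (e + 1)).choose e + (k + (e + 1)).choose (e + 1 + 1) * (e + 1 + 1) := by ring
      _ = k * (k + (e + 1)).choose e + (k + (e + 1)).choose (e + 1) * k := by rw [h1]
      _ = k * ((k + (e + 1)).choose e + (k + (e + 1)).choose (e + 1)) := by ring

/-- `∑_{i=0}^{d} i·C(n-d+i-2, i) = (n-d-1)·C(n-1, d-1)` for `1 ≤ d < n`. -/
theorem stmt2 (n d : ℕ) (hd : 1 ≤ d) (hdn : d < n) :
    ∑ i ∈ Finset.range (d + 1), i * Nat.choose (n - d + i - 2) i
      = (n - d - 1) * Nat.choose (n - 1) (d - 1) := by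
  have h := aux2 (n - d - 1) d hd
  have he : ∀ i, n - d + i - 2 = (n - d - 1) + i - 1 := fun i => by omega
  have hn : n - d - 1 + d = n - 1 := by omega
  calc ∑ i ∈ Finset.range (d + 1), i * Nat.choose (n - d + i - 2) i
      = ∑ i ∈ Finset.range (d + 1), i * Nat.choose ((n - d - 1) + i - 1) i := by
        exact Finset.sum_congr rfl fun i _ => by rw [he i]
    _ = (n - d - 1) * Nat.choose (n - d - 1 + d) (d - 1) := h
    _ = (n - d - 1) * Nat.choose (n - 1) (d - 1) := by rw [hn]
end

section
/- Let A be a 2×n real matrix and b ∈ ℝ², c ∈ ℝⁿ. Suppose y ∈ ℝ² satisfies a_{1i}y₁ + a_{2i}y₂ − c_i ≠ 0 for all i and there exists λ ≠ 0 with b₁ = λ·∑_i a_{1i}/(a_{1i}y₁ + a_{2i}y₂ − c_i) and b₂ = λ·∑_i a_{2i}/(a_{1i}y₁ + a_{2i}y₂ − c_i). Then C(y) = 0, where C(y) = ∑_{i∈I} (b₁a_{2i} − b₂a_{1i}) · ∏_{j∈I∖{i}} (a_{1j}y₁ + a_{2j}y₂ − c_j) and I = {i : b₁a_{2i} − b₂a_{1i}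 ≠ 0}. -/
open scoped Classical in
/-- If `y` is a critical point of the dual logarithmic barrier function (for some `λ ≠ 0`),
then the central curve polynomial `C(y)` vanishes at `y`. -/
theorem stmt11 (n : ℕ) (a1 a2 c : Fin n → ℝ) (b1 b2 : ℝ) (y1 y2 : ℝ)
    (hden : ∀ i, a1 i * y1 + a2 i * y2 - c i ≠ 0)
    (lam : ℝ) (hlam : lam ≠ 0)
    (h1 : b1 = lam * ∑ i, a1 i / (a1 i * y1 + a2 i * y2 - c i))
    (h2 : b2 = lam * ∑ i, a2 i / (a1 i * y1 + a2 i * y2 - c i)) :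
    ∑ i ∈ Finset.univ.filter (fun i => b1 * a2 i - b2 * a1 i ≠ 0),
      (b1 * a2 i - b2 * a1 i) *
        ∏ j ∈ (Finset.univ.filter (fun i => b1 * a2 i - b2 * a1 i ≠ 0)).erase i,
          (a1 j * y1 + a2 j * y2 - c j) = 0 := by
  set d : Fin n → ℝ := fun i => a1 i * y1 + a2 i * y2 - c i with hd
  set S : Finset (Fin n) := Finset.univ.filter (fun i => b1 * a2 i - b2 * a1 i ≠ 0) with hS
  have hA1 : ∑ i, a1 i / d i = b1 / lam := by
    rw [h1]; field_simp; rfl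
  have hA2 : ∑ i, a2 i / d i = b2 / lam := by
    rw [h2]; field_simp; rfl
  have hsum0 : ∑ i, (b1 * a2 i - b2 * a1 i) / d i = 0 := by
    have : ∑ i, (b1 * a2 i - b2 * a1 i) / d i
        = b1 * (∑ i, a2 i / d i) - b2 * (∑ i, a1 i / d i) := by
      rw [Finset.mul_sum, Finset.mul_sum, ← Finset.sum_sub_distrib]
      refine Finset.sum_congr rfl fun i _ => ?_
      field_simp
    rw [this, hA1, hA2]
    ring
  have hsumS : ∑ i ∈ S, (b1 * a2 i - b2 * a1 i) / d i = 0 := by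
    rw [← hsum0]
    refine Finset.sum_subset (Finset.subset_univ S) fun i _ hiS => ?_
    have : b1 * a2 i - b2 * a1 i = 0 := by
      by_contra h
      exact hiS (Finset.mem_filter.mpr ⟨Finset.mem_univ i, h⟩)
    rw [this, zero_div]
  calc ∑ i ∈ S, (b1 * a2 i - b2 * a1 i) * ∏ j ∈ S.erase i, d j
      = ∑ i ∈ S, ((b1 * a2 i - b2 * a1 i) / d i) * ∏ j ∈ S, d j := by
        refine Finset.sum_congr rfl fun i hi => ?_
        have hdi : d i ≠ 0 := hden i
        rw [← Finset.mul_prod_erase S d hi]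
        field_simp
    _ = (∑ i ∈ S, (b1 * a2 i - b2 * a1 i) / d i) * ∏ j ∈ S, d j := by
        rw [← Finset.sum_mul]
    _ = 0 := by rw [hsumS, zero_mul]
end
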